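/- Every monic polynomial of degree n ≥ 1 in ℍ[x] admits a factorization into linear factors: there exist x_1, …, x_n ∈ ℍ with P(x) = (x − x_n) * (x − x_{n−1}) * ⋯ * (x − x_1). -/

import Mathlib

open Polynomial Quaternion

noncomputable section

abbrev Hq := Quaternion ℝ
abbrev sig : ℝ →+* Hq := algebraMap ℝ Hq

----------------------------------------------------------------
-- generic eval lemmas
----------------------------------------------------------------
section Generic
variable {R : Type*} [Ring R]

theorem eval_mul_eq_sum (p q : R[X]) (a : R) :
    (p * q).eval a = p.sum fun i c => c * q.eval a * a ^ i := by
  induction p using Polynomial.induction_on' with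
  | add p1 p2 h1 h2 =>
      rw [add_mul, eval_add, h1, h2, ← Polynomial.sum_add_index]
      · intro i; simp
      · intro i b c; rw [add_mul, add_mul]
  | monomial i c =>
      rw [Polynomial.sum_monomial_index]
      · rw [← C_mul_X_pow_eq_monomial, mul_assoc, X_pow_mul, ← mul_assoc,
          eval_mul_X_pow, eval_C_mul, mul_assoc]
      · simp

theorem eval_mul_of_root (p q : R[X]) (a : R) (h : q.eval a = 0) :
    (p * q).eval a = 0 := by
  rw [eval_mul_eq_sum, Polynomial.sum]
  simp [h]

theorem exists_right_factor {p : R[X]} {a : R} (h : p.eval a = 0) :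
    ∃ q : R[X], p = q * (X - C a) := by
  refine ⟨p.sum fun k c => C c * (∑ i ∈ Finset.range k, X ^ i * (C a) ^ (k - 1 - i)), ?_⟩
  have key : (p.sum fun k c => C c * (∑ i ∈ Finset.range k, X ^ i * (C a) ^ (k - 1 - i)))
        * (X - C a)
      = p.sum fun k c => C c * (X ^ k - C a ^ k) := by
    rw [Polynomial.sum, Polynomial.sum, Finset.sum_mul]
    refine Finset.sum_congr rfl fun k _ => ?_
    rw [mul_assoc, (commute_X (C a)).geom_sum₂_mul]
  rw [key]
  have h2 : (p.sum fun k c => C c * (X ^ k - C a ^ k))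
      = (p.sum fun k c => C c * X ^ k) - (p.sum fun k c => C c * C a ^ k) := by
    rw [Polynomial.sum, Polynomial.sum, Polynomial.sum, ← Finset.sum_sub_distrib]
    exact Finset.sum_congr rfl fun k _ => by rw [mul_sub]
  rw [h2, sum_C_mul_X_pow_eq]
  have h3 : (p.sum fun k c => C c * C a ^ k) = C (p.eval a) := by
    rw [eval_eq_sum, Polynomial.sum, Polynomial.sum, map_sum]
    exact Finset.sum_congr rfl fun k _ => by rw [map_mul, map_pow]
  rw [h3, h, map_zero, sub_zero]

theorem linear_mul_linear (c d c' d' : R) :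
    (C c * X + C d) * (C c' * X + C d') =
      C (c * c') * X ^ 2 + C (c * d' + d * c') * X + C (d * d') := by
  have hX : ∀ a : R, (X : R[X]) * C a = C a * X := fun a => X_mul
  simp only [add_mul, mul_add, map_add, map_mul]
  rw [mul_assoc (C c) X (C c' * X), ← mul_assoc X (C c') X, hX, mul_assoc (C c') X X, ← sq,
    ← mul_assoc (C c) (C c') (X^2), ← C_mul, mul_assoc (C c) X (C d'), hX,
    ← mul_assoc (C c) (C d') X, ← C_mul, ← mul_assoc (C d) (C c') X, ← C_mul]
  rw [← C_mul]; abel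

end Generic

----------------------------------------------------------------
-- polynomial conjugation
----------------------------------------------------------------
section Conj
variable {R : Type*} [Ring R] [StarRing R]

def pconj (p : R[X]) : R[X] := p.sum fun k c => C (star c) * X ^ k

theorem coeff_pconj (p : R[X]) (k : ℕ) : (pconj p).coeff k = star (p.coeff k) := by
  rw [pconj, Polynomial.sum, finset_sum_coeff]
  simp only [coeff_C_mul, coeff_X_pow, mul_ite, mul_one, mul_zero]
  rw [Finset.sum_ite_eq p.support k fun i => star (p.coeff i)]
  by_cases h : k ∈ p.support
  · simp [h]
  · simp only [h, if_false]
    rw [Polynomial.notMem_support_iff.mp h, star_zero]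

theorem pconj_pconj (p : R[X]) : pconj (pconj p) = p := by
  ext k; simp [coeff_pconj]

theorem pconj_mul (p q : R[X]) : pconj (p * q) = pconj q * pconj p := by
  ext k
  rw [coeff_pconj, coeff_mul, coeff_mul, star_sum]
  rw [← Finset.Nat.sum_antidiagonal_swap]
  refine Finset.sum_congr rfl fun x hx => ?_
  simp [coeff_pconj, star_mul]

theorem pconj_add (p q : R[X]) : pconj (p + q) = pconj p + pconj q := by
  ext k; simp [coeff_pconj, star_add]

@[simp] theorem pconj_C (a : R) : pconj (C a) = C (star a) := by
  ext k; simp [coeff_pconj, coeff_C, apply_ite star]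

@[simp] theorem pconj_X : pconj (X : R[X]) = X := by
  ext k; simp [coeff_pconj, coeff_X, apply_ite star]

theorem degree_pconj (p : R[X]) : (pconj p).degree = p.degree := by
  rw [degree, degree]
  congr 1
  ext k
  simp [mem_support_iff, coeff_pconj, star_eq_zero]

theorem natDegree_pconj (p : R[X]) : (pconj p).natDegree = p.natDegree := by
  unfold natDegree; rw [degree_pconj]

theorem monic_pconj {p : R[X]} (hp : p.Monic) : (pconj p).Monic := by
  have h : (pconj p).leadingCoeff = star p.leadingCoeff := by
    rw [Polynomial.leadingCoeff, Polynomial.leadingCoeff, natDegree_pconj, coeff_pconj]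
  rw [Monic, h, hp.leadingCoeff, star_one]

end Conj

----------------------------------------------------------------
-- quaternion specifics
----------------------------------------------------------------

def cq : ℂ →+* Hq where
  toFun z := ⟨z.re, z.im, 0, 0⟩
  map_one' := by ext <;> simp
  map_mul' z w := by
    ext <;> simp [Complex.mul_re, Complex.mul_im] <;> (change _ = (_ : ℝ) + _ + _ + _ <;> simp [sub_eq_add_neg])
  map_zero' := by ext <;> simp
  map_add' z w := by ext <;> simp <;> (change _ = (_ : ℝ) + _; simp)

theorem cq_comp : (cq).comp (algebraMap ℝ ℂ) = algebraMap ℝ Hq := by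
  ext r
  · simp [cq]; rfl
  all_goals simp [cq, Quaternion.algebraMap_def]
  all_goals rfl

theorem cq_ofReal (r : ℝ) : cq (r : ℂ) = (r : Hq) := by
  have := congrArg (fun f => (f : ℝ →+* Hq) r) cq_comp
  simpa [Quaternion.algebraMap_def] using this

theorem commute_C_real (r : ℝ) (s : Hq[X]) : Commute (C (r : Hq)) s := by
  unfold Commute SemiconjBy
  refine Polynomial.ext fun k => ?_
  rw [coeff_C_mul, coeff_mul_C, Quaternion.coe_commutes]

theorem commute_map_real (p' : ℝ[X]) (s : Hq[X]) : Commute (p'.map sig) s := by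
  induction p' using Polynomial.induction_on' with
  | add p q hp hq => rw [Polynomial.map_add]; exact hp.add_left hq
  | monomial i c =>
      rw [Polynomial.map_monomial, ← C_mul_X_pow_eq_monomial]
      have h1 : Commute (C (sig c)) s := by
        simpa [Quaternion.algebraMap_def] using commute_C_real c s
      exact h1.mul_left ((Polynomial.commute_X s).pow_left i)

theorem exists_real_lift (N : Hq[X]) (h : ∀ k, star (N.coeff k) = N.coeff k) :
    ∃ N' : ℝ[X], N'.map sig = N := by
  rw [← Polynomial.mem_lifts, Polynomial.lifts_iff_coeff_lifts]
  intro k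
  refine ⟨(N.coeff k).re, ?_⟩
  have h2 := (Quaternion.star_eq_self (a := N.coeff k)).mp (h k)
  simp [Quaternion.algebraMap_def, ← h2]

theorem pconj_map_real (p' : ℝ[X]) : pconj (p'.map sig) = p'.map sig := by
  refine Polynomial.ext fun k => ?_
  rw [coeff_pconj, coeff_map]
  simp [Quaternion.algebraMap_def]

theorem pconj_eval_real (p : Hq[X]) (r : ℝ) :
    (pconj p).eval (r : Hq) = star (p.eval (r : Hq)) := by
  rw [eval_eq_sum_range' (lt_of_le_of_lt (natDegree_pconj p).le (Nat.lt_succ_self _)),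
    eval_eq_sum_range' (Nat.lt_succ_self _), star_sum]
  refine Finset.sum_congr rfl fun i _ => ?_
  rw [coeff_pconj, star_mul, ← Quaternion.coe_pow, Quaternion.star_coe,
    Quaternion.coe_commutes]

theorem eval_real_mul (p q : Hq[X]) (r : ℝ) :
    (p * q).eval (r : Hq) = p.eval (r : Hq) * q.eval (r : Hq) := by
  rw [eval_mul_eq_sum, Polynomial.sum]
  have h : ∀ i ∈ p.support, p.coeff i * q.eval (r : Hq) * (r : Hq) ^ i
      = (p.coeff i * (r : Hq) ^ i) * q.eval (r : Hq) := fun i _ => by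
    rw [mul_assoc, mul_assoc, ← Quaternion.coe_pow, ← Quaternion.coe_commutes]
  rw [Finset.sum_congr rfl h, ← Finset.sum_mul]
  rw [eval_eq_sum (p := p), Polynomial.sum]

theorem coe_hq_eq_zero {x : ℝ} : ((x : ℝ) : Hq) = 0 ↔ x = 0 := by
  constructor
  · intro h
    exact Quaternion.coe_injective (by rw [h]; simp)
  · rintro rfl; simp

theorem quaternion_exists_eval_zero (P : Hq[X]) (hP : P.Monic) (hd : 1 ≤ P.natDegree) :
    ∃ w : Hq, P.eval w = 0 := by
  classical
  set Pc := pconj P with hPcdef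
  have hPcm : Pc.Monic := monic_pconj hP
  set N := P * Pc with hNdef
  have hNstar : ∀ k, star (N.coeff k) = N.coeff k := by
    intro k
    have h1 : pconj N = N := by rw [hNdef, pconj_mul, hPcdef, pconj_pconj]
    calc star (N.coeff k) = (pconj N).coeff k := (coeff_pconj N k).symm
    _ = N.coeff k := by rw [h1]
  obtain ⟨N', hN'⟩ := exists_real_lift N hNstar
  have hNdeg : N.natDegree = P.natDegree + P.natDegree := by
    rw [hNdef, natDegree_mul']
    · rw [natDegree_pconj]
    · rw [hP.leadingCoeff, hPcm.leadingCoeff, one_mul]; exact one_ne_zero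
  have hN'deg : N'.natDegree = P.natDegree + P.natDegree := by
    rw [← hNdeg, ← hN', natDegree_map_eq_of_injective Quaternion.algebraMap_injective]
  set A : ℝ →+* ℂ := algebraMap ℝ ℂ with hAdef
  have hA : Function.Injective A := A.injective
  have hdegC : 0 < (N'.map A).degree := by
    rw [degree_map_eq_of_injective hA]
    exact natDegree_pos_iff_degree_pos.mp (by omega)
  obtain ⟨z, hz⟩ := Complex.exists_root hdegC
  have hzeval : eval₂ A z N' = 0 := by rwa [IsRoot, eval_map] at hz
  by_cases him : z.im = 0
  · -- z is real
    set w : Hq := ((z.re : ℝ) : Hq) with hwdef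
    have hzre : z = (z.re : ℂ) := Complex.ext (by simp) (by simp [him])
    have hcqz : cq z = w := by rw [hzre, cq_ofReal]
    have hNw : N.eval w = 0 := by
      rw [← hN', eval_map, ← hcqz]
      calc eval₂ sig (cq z) N' = eval₂ (cq.comp A) (cq z) N' := by rw [cq_comp]
      _ = cq (eval₂ A z N') := (hom_eval₂ N' A cq z).symm
      _ = 0 := by rw [hzeval, map_zero]
    have hsplit : N.eval w = P.eval w * star (P.eval w) := by
      rw [hNdef, hwdef, eval_real_mul, hPcdef, pconj_eval_real]
    refine ⟨w, ?_⟩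
    have h0 : P.eval w * star (P.eval w) = 0 := by rw [← hsplit, hNw]
    rw [Quaternion.self_mul_star] at h0
    exact Quaternion.normSq_eq_zero.mp (coe_hq_eq_zero.mp h0)
  · -- z is not real
    set m' : ℝ[X] := X ^ 2 + C (-(2 * z.re)) * X + C (Complex.normSq z) with hm'def
    have hm'm : m'.Monic := by
      rw [hm'def, add_assoc]
      apply monic_X_pow_add
      exact lt_of_le_of_lt degree_linear_le (by norm_num)
    have hm'2 : m'.natDegree = 2 := by
      have h1 : m' = C 1 * X ^ 2 + C (-(2 * z.re)) * X + C (Complex.normSq z) := by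
        rw [map_one, one_mul]
      rw [h1, natDegree_quadratic one_ne_zero]
    have hmapm' : m'.map A = (X - C z) * (X - C ((starRingEnd ℂ) z)) := by
      have h1 : (X - C z) * (X - C ((starRingEnd ℂ) z))
          = X ^ 2 + C (-(z + (starRingEnd ℂ) z)) * X + C (z * (starRingEnd ℂ) z) := by
        rw [map_neg, map_add, map_mul]
        ring
      rw [h1, Complex.add_conj, Complex.mul_conj, hm'def]
      simp only [Polynomial.map_add, Polynomial.map_mul, Polynomial.map_pow,
        Polynomial.map_X, Polynomial.map_C]
      norm_num [hAdef, Complex.coe_algebraMap]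
    have hzbar : eval₂ A ((starRingEnd ℂ) z) N' = 0 := by
      have h1 : (starRingEnd ℂ).comp A = A := RingHom.ext fun r => Complex.conj_ofReal r
      calc eval₂ A ((starRingEnd ℂ) z) N'
          = eval₂ ((starRingEnd ℂ).comp A) ((starRingEnd ℂ) z) N' := by rw [h1]
      _ = (starRingEnd ℂ) (eval₂ A z N') := (hom_eval₂ N' A (starRingEnd ℂ) z).symm
      _ = 0 := by rw [hzeval, map_zero]
    have hne : ((starRingEnd ℂ) z) - z ≠ 0 := by
      intro h
      apply him
      have h2 : (starRingEnd ℂ) z = z := by linear_combination h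
      exact Complex.conj_eq_iff_im.mp h2
    have hdvdC : m'.map A ∣ N'.map A := by
      rw [hmapm']
      have h1 : (X - C z) ∣ N'.map A := dvd_iff_isRoot.mpr hz
      obtain ⟨S, hS⟩ := h1
      have hSroot : S.IsRoot ((starRingEnd ℂ) z) := by
        have h2 := hzbar
        rw [← eval_map, hS, eval_mul, eval_sub, eval_X, eval_C] at h2
        rcases mul_eq_zero.mp h2 with h3 | h3
        · exact absurd h3 hne
        · exact h3
      obtain ⟨T, hT⟩ := dvd_iff_isRoot.mpr hSroot
      exact ⟨T, by rw [hS, hT, mul_assoc]⟩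
    have hm'dvd : m' ∣ N' := (map_dvd_map A hA hm'm).mp hdvdC
    set m : Hq[X] := m'.map sig with hmdef
    have hmm : m.Monic := hm'm.map sig
    have hmdeg : m.natDegree = 2 := by
      rw [hmdef, natDegree_map_eq_of_injective Quaternion.algebraMap_injective, hm'2]
    have hmdvd : m ∣ N := by
      obtain ⟨t, ht⟩ := hm'dvd
      exact ⟨t.map sig, by rw [← hN', ht, Polynomial.map_mul]⟩
    have hcom : ∀ s : Hq[X], m * s = s * m := fun s => (commute_map_real m' s).eq
    set Q := P /ₘ m with hQdef
    set r := P %ₘ m with hrdef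
    have hPdecomp : P = r + m * Q := (modByMonic_add_div P m).symm
    have hm1 : m ≠ 1 := by intro h; rw [h] at hmdeg; simp at hmdeg
    have hrdeg : r.natDegree < 2 := by
      rw [← hmdeg]; exact natDegree_modByMonic_lt P hmm hm1
    set c := r.coeff 1 with hcdef
    set d := r.coeff 0 with hddef
    have hrlin : r = C c * X + C d := eq_X_add_C_of_natDegree_le_one (by omega)
    have hpcr : pconj r = C (star c) * X + C (star d) := by
      rw [hrlin, pconj_add, pconj_mul, pconj_X, pconj_C, pconj_C, X_mul]
    have hPc2 : Pc = pconj r + m * pconj Q := by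
      rw [hPcdef, hPdecomp, pconj_add, pconj_mul, pconj_map_real, hcom]
    have hNdecomp : N = r * pconj r
        + m * (r * pconj Q + Q * pconj r + Q * (m * pconj Q)) := by
      have h1 : r * (m * pconj Q) = m * (r * pconj Q) := by
        rw [← mul_assoc, ← hcom r, mul_assoc]
      rw [hNdef, hPdecomp, hPc2, add_mul, mul_add, mul_add, h1,
        mul_assoc m Q (pconj r), mul_assoc m Q (m * pconj Q), mul_add, mul_add]
      abel
    have hmdvd_r : m ∣ r * pconj r := by
      obtain ⟨T, hT⟩ := hmdvd
      refine ⟨T - (r * pconj Q + Q * pconj r + Q * (m * pconj Q)), ?_⟩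
      rw [mul_sub, ← hT, hNdecomp]
      abel
    have hprod : r * pconj r
        = C (c * star c) * X ^ 2 + C (c * star d + d * star c) * X + C (d * star d) := by
      rw [hpcr, hrlin, linear_mul_linear]
    by_cases hc : c = 0
    · -- remainder is constant
      have h00 : r * pconj r = C (d * star d) := by
        rw [hprod, hc]; simp
      have hd0 : d = 0 := by
        by_contra hdne
        obtain ⟨t, ht⟩ := hmdvd_r
        rw [h00] at ht
        have hk : d * star d ≠ 0 := by
          rw [Quaternion.self_mul_star]
          exact fun h => Quaternion.normSq_ne_zero.mpr hdne (coe_hq_eq_zero.mp h)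
        have ht0 : t ≠ 0 := by
          rintro rfl
          rw [mul_zero] at ht
          exact hk (by simpa using ht)
        have h2 : (m * t).natDegree = 2 + t.natDegree := by
          rw [natDegree_mul' (by rw [hmm.leadingCoeff, one_mul]; exact leadingCoeff_ne_zero.mpr ht0), hmdeg]
        rw [← ht, natDegree_C] at h2
        omega
      have hr00 : r = 0 := by rw [hrlin, hd0, hc]; simp
      set w := cq z with hwdef
      have hmw : m.eval w = 0 := by
        rw [hmdef, eval_map]
        calc eval₂ sig (cq z) m' = eval₂ (cq.comp A) (cq z) m' := by rw [cq_comp]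
        _ = cq (eval₂ A z m') := (hom_eval₂ m' A cq z).symm
        _ = 0 := by
            rw [← eval_map, hmapm']
            simp [eval_mul]
      refine ⟨w, ?_⟩
      rw [hPdecomp, hr00, zero_add, hcom Q]
      exact eval_mul_of_root Q m w hmw
    · -- remainder is genuinely linear
      set s : ℝ[X] := C (Quaternion.normSq c) * X ^ 2
          + C (2 * (c * star d).re) * X + C (Quaternion.normSq d) with hsdef
      have hstar1 : d * star c = star (c * star d) := by rw [star_mul, star_star]
      have hstar2 : star d * c = star (star c * d) := by rw [star_mul, star_star]
      have e1 : sig (Quaternion.normSq c) = c * star c := by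
        rw [Quaternion.self_mul_star]; simp [Quaternion.algebraMap_def]
      have e2 : sig (2 * (c * star d).re) = c * star d + d * star c := by
        rw [hstar1, Quaternion.self_add_star']; simp [Quaternion.algebraMap_def]
      have e3 : sig (Quaternion.normSq d) = d * star d := by
        rw [Quaternion.self_mul_star]; simp [Quaternion.algebraMap_def]
      have key1 : r * pconj r = s.map sig := by
        rw [hprod, hsdef]
        simp only [Polynomial.map_add, Polynomial.map_mul, Polynomial.map_pow,
          Polynomial.map_X, Polynomial.map_C, e1, e2, e3]
      have hre : (star c * d).re = (c * star d).re := by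
        simp only [Quaternion.re_mul, Quaternion.re_star, Quaternion.imI_star,
          Quaternion.imJ_star, Quaternion.imK_star]
        ring
      have f1 : sig (Quaternion.normSq c) = star c * c := by
        rw [Quaternion.star_mul_self]; simp [Quaternion.algebraMap_def]
      have f2 : sig (2 * (c * star d).re) = star c * d + star d * c := by
        rw [hstar2, Quaternion.self_add_star', hre]; simp [Quaternion.algebraMap_def]
      have f3 : sig (Quaternion.normSq d) = star d * d := by
        rw [Quaternion.star_mul_self]; simp [Quaternion.algebraMap_def]
      have key2 : pconj r * r = s.map sig := by
        rw [hpcr, hrlin, linear_mul_linear, hsdef]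
        simp only [Polynomial.map_add, Polynomial.map_mul, Polynomial.map_pow,
          Polynomial.map_X, Polynomial.map_C, f1, f2, f3]
      have hm's : m' ∣ s := by
        apply (map_dvd_map sig Quaternion.algebraMap_injective hm'm).mp
        rw [← hmdef, ← key1]
        exact hmdvd_r
      obtain ⟨t', ht'⟩ := hm's
      have hsc : Quaternion.normSq c ≠ 0 := Quaternion.normSq_ne_zero.mpr hc
      have hsdeg : s.natDegree = 2 := natDegree_quadratic hsc
      have ht'0 : t' ≠ 0 := by
        rintro rfl
        rw [mul_zero] at ht'
        rw [ht', natDegree_zero] at hsdeg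
        omega
      have ht'deg : t'.natDegree = 0 := by
        have h1 := natDegree_mul hm'm.ne_zero ht'0
        rw [← ht', hsdeg, hm'2] at h1
        omega
      have ht'C : t' = C (t'.coeff 0) := eq_C_of_natDegree_eq_zero ht'deg
      have hlam : t'.coeff 0 = Quaternion.normSq c := by
        have h1 : s.leadingCoeff = Quaternion.normSq c := leadingCoeff_quadratic hsc
        rw [ht', ht'C, leadingCoeff_mul, hm'm.leadingCoeff, one_mul, leadingCoeff_C] at h1
        exact h1
      have hs_eq : s = m' * C (Quaternion.normSq c) := by
        rw [ht', ht'C, hlam]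
      set w : Hq := -(c⁻¹ * d) with hwdef
      have hrw : r.eval w = 0 := by
        rw [hrlin, eval_add, eval_C_mul, eval_X, eval_C, hwdef, mul_neg,
          ← mul_assoc, mul_inv_cancel₀ hc, one_mul, neg_add_cancel]
      have hmw : m.eval w = 0 := by
        have h1 : pconj r * r = m * C ((Quaternion.normSq c : ℝ) : Hq) := by
          rw [key2, hs_eq, Polynomial.map_mul, ← hmdef, Polynomial.map_C]
          simp [Quaternion.algebraMap_def]
        have h2 : (pconj r * r).eval w = 0 := eval_mul_of_root _ _ _ hrw
        rw [h1, hcom (C _), eval_C_mul] at h2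
        have hk : ((Quaternion.normSq c : ℝ) : Hq) ≠ 0 :=
          fun h => hsc (coe_hq_eq_zero.mp h)
        rcases mul_eq_zero.mp h2 with h3 | h3
        · exact absurd h3 hk
        · exact h3
      refine ⟨w, ?_⟩
      rw [hPdecomp, eval_add, hrw, hcom Q, eval_mul_of_root Q m w hmw, add_zero]

theorem monic_peel {P : Hq[X]} {k : ℕ} (hP : P.Monic) (hdeg : P.natDegree = k + 1) :
    ∃ (a : Hq) (Q : Hq[X]), P = Q * (X - C a) ∧ Q.Monic ∧ Q.natDegree = k := by
  obtain ⟨a, ha⟩ := quaternion_exists_eval_zero P hP (by omega)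
  obtain ⟨Q, hQ⟩ := exists_right_factor ha
  have hQ0 : Q ≠ 0 := by
    rintro rfl
    rw [zero_mul] at hQ
    exact hP.ne_zero hQ
  have hlc : Q.leadingCoeff * (X - C a).leadingCoeff ≠ 0 := by
    rw [(monic_X_sub_C a).leadingCoeff, mul_one]
    exact leadingCoeff_ne_zero.mpr hQ0
  have hdQ : Q.natDegree = k := by
    have h1 := natDegree_mul' hlc
    rw [← hQ, hdeg, natDegree_X_sub_C] at h1
    omega
  have hQm : Q.Monic := by
    have h1 := leadingCoeff_mul' hlc
    rw [← hQ, hP.leadingCoeff, (monic_X_sub_C a).leadingCoeff, mul_one] at h1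
    exact h1.symm
  exact ⟨a, Q, hQ, hQm, hdQ⟩

end

theorem quaternion_monic_factorization (n : ℕ) (hn : 1 ≤ n)
    (P : Polynomial (Quaternion ℝ)) (hP : P.Monic) (hdeg : P.natDegree = n) :
    ∃ x : Fin n → Quaternion ℝ,
      P = (List.ofFn fun i : Fin n => Polynomial.X - Polynomial.C (x i)).prod := by
  open Polynomial in
  induction n, hn using Nat.le_induction generalizing P with
  | base =>
      obtain ⟨a, Q, hQ, hQm, hdQ⟩ := monic_peel hP hdeg
      refine ⟨fun _ => a, ?_⟩
      rw [hQ, hQm.natDegree_eq_zero.mp hdQ, one_mul]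
      simp
  | succ k hk ih =>
      obtain ⟨a, Q, hQ, hQm, hdQ⟩ := monic_peel hP hdeg
      obtain ⟨g, hg⟩ := ih Q hQm hdQ
      refine ⟨Fin.snoc g a, ?_⟩
      rw [List.ofFn_succ']
      simp only [Fin.snoc_castSucc, Fin.snoc_last, List.concat_eq_append,
        List.prod_append, List.prod_cons, List.prod_nil, mul_one]
      rw [hQ, hg]
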